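/- The cohomology class of the 3-cocycle α(a,b,c) = ⌊a'+b'⌋·c' on ℤ/nℤ with values in ℚ/ℤ has exact order n in H³(ℤ/nℤ; ℚ/ℤ); in particular it generates H³(ℤ/nℤ; ℚ/ℤ) ≅ ℤ/nℤ. -/

import Mathlib

section Cochains

variable (G : Type) [Group G] (M : Type) [AddCommGroup M]

/-- The inhomogeneous coboundary `d² : C²(G;M) → C³(G;M)` for trivial coefficients. -/
def cobound2 : (G → G → M) →+ (G → G → G → M) :=
  AddMonoidHom.mk'
    (fun f g h k => f h k - f (g * h) k + f g (h * k) - f g h)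
    (by intro f₁ f₂; funext g h k; simp only [Pi.add_apply]; abel)

/-- The inhomogeneous coboundary `d³ : C³(G;M) → C⁴(G;M)` for trivial coefficients. -/
def cobound3 : (G → G → G → M) →+ (G → G → G → G → M) :=
  AddMonoidHom.mk'
    (fun f g h k l =>
      f h k l - f (g * h) k l + f g (h * k) l - f g h (k * l) + f g h k)
    (by intro f₁ f₂; funext g h k l; simp only [Pi.add_apply]; abel)

/-- Third group cohomology `H³(G; M)` with trivial coefficients, as 3-cocycles
modulo 3-coboundaries. -/
def thirdCohomology : Type :=
  (cobound3 G M).ker ⧸ ((cobound2 G M).range.addSubgroupOf (cobound3 G M).ker)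

instance : AddCommGroup (thirdCohomology G M) :=
  inferInstanceAs (AddCommGroup
    ((cobound3 G M).ker ⧸ ((cobound2 G M).range.addSubgroupOf (cobound3 G M).ker)))

end Cochains

/-- The fractional representative `x' ∈ (1/n)ℤ ∩ [0,1)` of a class `x ∈ ℤ/nℤ ≅ (1/n)ℤ/ℤ`. -/
def fracRep (n : ℕ) (x : ZMod n) : ℚ := (x.val : ℚ) / n

/-- The 3-cocycle `α(a,b,c) = ⌊a' + b'⌋ · c'  (mod ℤ)` on the cyclic group `ℤ/nℤ`
(written multiplicatively), with values in `ℚ/ℤ`. -/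
noncomputable def platonicCocycle (n : ℕ)
    (a b c : Multiplicative (ZMod n)) : AddCircle (1 : ℚ) :=
  ((⌊fracRep n a.toAdd + fracRep n b.toAdd⌋ : ℚ) * fracRep n c.toAdd : ℚ)

/-!  Auxiliary development. -/

set_option linter.unusedSectionVars false

namespace Plat
open Finset

variable {M : Type} [AddCommGroup M]

section core
variable {n : ℕ} [NeZero n]

/-- Additive-notation 2-coboundary on `ℤ/n`. -/
def d2 (u : ZMod n → ZMod n → M) : ZMod n → ZMod n → ZMod n → M :=
  fun x y z => u y z - u (x+y) z + u x (y+z) - u x y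

/-- Additive-notation 3-cocycle condition on `ℤ/n`. -/
def IsCo (f : ZMod n → ZMod n → ZMod n → M) : Prop :=
  ∀ x y z w : ZMod n, f y z w - f (x+y) z w + f x (y+z) w - f x y (z+w) + f x y z = 0

/-- The basic invariant of a 3-cochain on `ℤ/n`. -/
def Sv (f : ZMod n → ZMod n → ZMod n → M) : M := ∑ j ∈ range n, f 1 ((j : ℕ) : ZMod n) 1

def Tv (f : ZMod n → ZMod n → ZMod n → M) (x : ZMod n) : M :=
  ∑ j ∈ range n, f x ((j : ℕ) : ZMod n) 1

/-- The explicit homotopy 2-cochain. -/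
def wc (f : ZMod n → ZMod n → ZMod n → M) (x y : ZMod n) : M :=
  f x 0 0 - ∑ j ∈ range y.val, f x ((j : ℕ) : ZMod n) 1

lemma aux_eq {a b e : M} (h : e = 0) (h2 : a - b = e) : a = b := by
  apply eq_of_sub_eq_zero; rw [h2, h]

lemma sum_range_natCast (h : ZMod n → M) :
    ∑ j ∈ range n, h ((j : ℕ) : ZMod n) = ∑ x : ZMod n, h x := by
  refine Finset.sum_bij' (fun j _ => ((j : ℕ) : ZMod n)) (fun x _ => x.val) ?_ ?_ ?_ ?_ ?_
  · intro a ha; exact Finset.mem_univ _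
  · intro x _; exact Finset.mem_range.mpr (ZMod.val_lt x)
  · intro a ha; exact ZMod.val_natCast_of_lt (Finset.mem_range.mp ha)
  · intro x _; exact ZMod.natCast_rightInverse x
  · intro a ha; rfl

lemma sum_shift1 (h : ZMod n → M) :
    ∑ j ∈ range n, h (((j : ℕ) : ZMod n) + 1) = ∑ j ∈ range n, h ((j : ℕ) : ZMod n) := by
  rw [sum_range_natCast (fun x => h (x + 1)), sum_range_natCast h]
  exact Fintype.sum_equiv (Equiv.addRight 1) _ _ (fun x => rfl)

lemma telescope (v : ZMod n → M) :
    ∑ j ∈ range n, (v (((j : ℕ) : ZMod n) + 1) - v ((j : ℕ) : ZMod n)) = 0 := by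
  have h2 : ∑ j ∈ range n, (v ((((j+1) : ℕ) : ZMod n)) - v ((j : ℕ) : ZMod n))
      = v ((n : ℕ) : ZMod n) - v ((0 : ℕ) : ZMod n) :=
    Finset.sum_range_sub (fun j : ℕ => v ((j : ℕ) : ZMod n)) n
  have h1 : ∀ j : ℕ, (((j : ℕ) : ZMod n) + 1) = (((j+1 : ℕ)) : ZMod n) := by
    intro j; push_cast; ring
  calc ∑ j ∈ range n, (v (((j : ℕ) : ZMod n) + 1) - v ((j : ℕ) : ZMod n))
      = ∑ j ∈ range n, (v ((((j+1) : ℕ) : ZMod n)) - v ((j : ℕ) : ZMod n)) := by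
        refine Finset.sum_congr rfl fun j _ => by rw [h1]
    _ = v ((n : ℕ) : ZMod n) - v ((0 : ℕ) : ZMod n) := h2
    _ = 0 := by rw [ZMod.natCast_self]; simp

lemma Sv_d2 (u : ZMod n → ZMod n → M) : Sv (d2 u) = 0 := by
  unfold Sv d2
  have h : ∀ j ∈ range n,
      (u ((j:ℕ):ZMod n) 1 - u (1 + ((j:ℕ):ZMod n)) 1 + u 1 (((j:ℕ):ZMod n) + 1) - u 1 ((j:ℕ):ZMod n))
      = ((fun x => u 1 x) (((j:ℕ):ZMod n)+1) - (fun x => u 1 x) ((j:ℕ):ZMod n))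
        - ((fun x => u x 1) (((j:ℕ):ZMod n)+1) - (fun x => u x 1) ((j:ℕ):ZMod n)) := by
    intro j _
    rw [add_comm 1 ((j:ℕ):ZMod n)]
    simp only
    abel
  rw [Finset.sum_congr rfl h, Finset.sum_sub_distrib, telescope (fun x => u 1 x),
    telescope (fun x => u x 1), sub_zero]

variable {f g : ZMod n → ZMod n → ZMod n → M}

lemma Tv_zero (hf : IsCo f) : Tv f 0 = 0 := by
  unfold Tv
  have h : ∀ j ∈ range n, f 0 ((j:ℕ):ZMod n) 1
      = (fun z => f 0 0 z) (((j:ℕ):ZMod n)+1) - (fun z => f 0 0 z) ((j:ℕ):ZMod n) := by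
    intro j _
    have hc := hf 0 0 ((j:ℕ):ZMod n) 1
    simp only [zero_add, add_zero] at hc
    exact aux_eq hc (by simp only; abel)
  rw [Finset.sum_congr rfl h, telescope (fun z => f 0 0 z)]

lemma Tv_succ (hf : IsCo f) (x : ZMod n) : Tv f (x+1) = Sv f + Tv f x := by
  have h : ∀ j ∈ range n, f (x+1) ((j:ℕ):ZMod n) 1
      = f 1 ((j:ℕ):ZMod n) 1 + f x (((j:ℕ):ZMod n)+1) 1
        - ((fun z => f x 1 z) (((j:ℕ):ZMod n)+1) - (fun z => f x 1 z) ((j:ℕ):ZMod n)) := by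
    intro j _
    have hc := hf x 1 ((j:ℕ):ZMod n) 1
    rw [add_comm 1 ((j:ℕ):ZMod n)] at hc
    exact aux_eq (neg_eq_zero.mpr hc) (by simp only; abel)
  show ∑ j ∈ range n, f (x+1) ((j:ℕ):ZMod n) 1 = _
  rw [Finset.sum_congr rfl h]
  rw [Finset.sum_sub_distrib, Finset.sum_add_distrib, telescope (fun z => f x 1 z), sub_zero,
    sum_shift1 (fun z => f x z 1)]
  rfl

lemma Tv_nat (hf : IsCo f) (a : ℕ) : Tv f ((a : ℕ) : ZMod n) = a • Sv f := by
  induction a with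
  | zero => simpa using Tv_zero hf
  | succ a ih =>
      have h : ((a+1 : ℕ) : ZMod n) = ((a:ℕ) : ZMod n) + 1 := by push_cast; ring
      rw [h, Tv_succ hf, ih, succ_nsmul]
      abel

lemma Tv_eq (hf : IsCo f) (x : ZMod n) : Tv f x = x.val • Sv f := by
  conv_lhs => rw [← ZMod.natCast_rightInverse x]
  exact Tv_nat hf x.val

lemma div2 {m k : ℕ} (h1 : k ≤ m) (h2 : m < 2*k) : m / k = 1 :=
  Nat.div_eq_of_lt_le (by omega) (by omega)

lemma mod2 {m k : ℕ} (h1 : k ≤ m) (h2 : m < 2*k) : m % k = m - k := by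
  rw [Nat.mod_eq_sub_mod h1, Nat.mod_eq_of_lt (by omega)]

lemma wc_zero (x : ZMod n) : wc f x 0 = f x 0 0 := by
  unfold wc; rw [ZMod.val_zero]; simp

lemma wc_succ (x v : ZMod n) (hv : v.val + 1 < n) :
    wc f x (v+1) = wc f x v - f x v 1 := by
  have h1 : v + 1 = ((v.val + 1 : ℕ) : ZMod n) := by
    conv_lhs => rw [← ZMod.natCast_rightInverse v]
    push_cast; ring
  have h2 : (v+1).val = v.val + 1 := by rw [h1, ZMod.val_natCast_of_lt hv]
  unfold wc
  rw [h2, Finset.sum_range_succ, ZMod.natCast_rightInverse v]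
  abel

/-- The key identity: a 3-cocycle equals the standard "carry" cocycle scaled by its
invariant, up to an explicit coboundary. -/
lemma key (hf : IsCo f) (x y z : ZMod n) :
    f x y z = (x.val * ((y.val + z.val) / n)) • Sv f - d2 (wc f) x y z := by
  suffices H : ∀ c : ℕ, c < n → ∀ x y : ZMod n,
      f x y ((c:ℕ):ZMod n)
        = (x.val * ((y.val + c) / n)) • Sv f - d2 (wc f) x y ((c:ℕ):ZMod n) by
    have h := H z.val (ZMod.val_lt z) x y
    rwa [ZMod.natCast_rightInverse z] at h
  intro c
  induction c with
  | zero =>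
    intro _ x y
    have h0 : ((0:ℕ) : ZMod n) = (0 : ZMod n) := by norm_num
    rw [h0]
    have hdiv : (y.val + 0) / n = 0 := Nat.div_eq_of_lt (by have := ZMod.val_lt y; omega)
    rw [hdiv, Nat.mul_zero, zero_smul]
    show f x y 0 = 0 - (wc f y 0 - wc f (x+y) 0 + wc f x (y+0) - wc f x y)
    rw [add_zero, wc_zero, wc_zero]
    have hc := hf x y 0 0
    rw [add_zero, add_zero] at hc
    exact aux_eq hc (by abel)
  | succ c IH =>
    intro hc1 x y
    have hcn : c < n := by omega
    have hz' : ((c+1:ℕ) : ZMod n) = ((c:ℕ):ZMod n) + 1 := by push_cast; ring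
    set z := ((c:ℕ):ZMod n) with hzdef
    have hzval : z.val = c := ZMod.val_natCast_of_lt hcn
    have hyval := ZMod.val_lt y
    have hstep : f x y (z + 1) = f x y z + (f y z 1 - f (x+y) z 1 + f x (y+z) 1) := by
      have hc0 := hf x y z 1
      exact aux_eq (neg_eq_zero.mpr hc0) (by abel)
    have hyz : (y + z).val = (y.val + c) % n := by
      rw [ZMod.val_add, hzval]
    have hw1 : wc f y (z+1) = wc f y z - f y z 1 := wc_succ y z (by omega)
    have hw2 : wc f (x+y) (z+1) = wc f (x+y) z - f (x+y) z 1 := wc_succ (x+y) z (by omega)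
    rw [hz', hstep, IH hcn x y]
    simp only [d2]
    rw [show y + (z + 1) = (y + z) + 1 by ring, hw1, hw2]
    by_cases hB : y.val + c = n - 1
    · have hn1 : 1 ≤ n := Nat.one_le_iff_ne_zero.mpr (NeZero.ne n)
      have hyzv : (y + z).val = n - 1 := by rw [hyz, Nat.mod_eq_of_lt (by omega), hB]
      have hyz0 : y + z = ((n-1 : ℕ) : ZMod n) := by
        conv_lhs => rw [← ZMod.natCast_rightInverse (y+z)]
        rw [hyzv]
      have hyz1 : (y + z) + 1 = 0 := by
        rw [hyz0, show (((n-1:ℕ):ZMod n) + 1) = (((n-1)+1 : ℕ) : ZMod n) by push_cast; ring,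
          show (n-1)+1 = n by omega, ZMod.natCast_self]
      have hdiv : x.val * ((y.val + (c+1)) / n) = x.val * ((y.val + c)/n) + x.val := by
        rw [show y.val + (c+1) = n by omega, Nat.div_self (by omega),
          show y.val + c = n - 1 from hB, Nat.div_eq_of_lt (by omega)]
        ring
      have hwyz : wc f x (y+z) = f x 0 0 - (x.val • Sv f - f x (y+z) 1) := by
        unfold wc
        rw [hyzv]
        congr 1
        have hTv := Tv_eq hf x
        rw [Tv] at hTv
        have hr : range ((n-1)+1) = range n := by congr 1; omega
        have hdecomp := Finset.sum_range_succ (fun j : ℕ => f x ((j:ℕ):ZMod n) 1) (n-1)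
        rw [hr] at hdecomp
        rw [hyz0, eq_sub_iff_add_eq]
        exact hdecomp.symm.trans hTv
      rw [hyz1, wc_zero, hwyz, hdiv, add_smul]
      abel
    · have hA : (y.val + c) % n + 1 < n ∧ (y.val + (c+1)) / n = (y.val + c) / n := by
        rcases lt_or_ge (y.val + c) n with h | h
        · constructor
          · rw [Nat.mod_eq_of_lt h]; omega
          · rw [Nat.div_eq_of_lt h, Nat.div_eq_of_lt (by omega)]
        · have hlt : y.val + c < 2*n := by omega
          constructor
          · rw [mod2 h hlt]; omega
          · rw [div2 h hlt, div2 (by omega) (by omega)]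
      have hw3 : wc f x ((y+z) + 1) = wc f x (y+z) - f x (y+z) 1 :=
        wc_succ x (y+z) (by rw [hyz]; exact hA.1)
      rw [hw3, hA.2]
      abel

lemma avg (hf : IsCo f) (x y z : ZMod n) :
    n • f x y z = d2 (fun a b => -∑ c : ZMod n, f a b c) x y z := by
  have h0 : ∑ w : ZMod n, (f y z w - f (x+y) z w + f x (y+z) w - f x y (z+w) + f x y z) = 0 :=
    Finset.sum_eq_zero (fun w _ => hf x y z w)
  have hD : ∑ w : ZMod n, f x y (z+w) = ∑ w : ZMod n, f x y w :=
    Fintype.sum_equiv (Equiv.addLeft z) _ _ (fun w => rfl)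
  have hcard : ∑ _w : ZMod n, f x y z = n • f x y z := by
    rw [Finset.sum_const, Finset.card_univ, ZMod.card]
  rw [Finset.sum_add_distrib, Finset.sum_sub_distrib, Finset.sum_add_distrib,
    Finset.sum_sub_distrib, hD, hcard] at h0
  exact aux_eq h0 (by simp only [d2]; abel)

lemma smul_nat_Sv (m : ℕ) : Sv (fun x y z => m • f x y z) = m • Sv f := by
  unfold Sv; rw [Finset.smul_sum]

lemma n_smul_Sv (hf : IsCo f) : n • Sv f = 0 := by
  have hfe : (fun x y z => n • f x y z) = d2 (fun a b => -∑ c : ZMod n, f a b c) :=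
    funext fun x => funext fun y => funext fun z => avg hf x y z
  rw [← smul_nat_Sv n, hfe, Sv_d2]

lemma sub_is_cob (hf : IsCo f) (hg : IsCo g) (k : ℤ) (hS : Sv f = k • Sv g) :
    (fun x y z => f x y z - k • g x y z) = d2 (fun a b => k • wc g a b - wc f a b) := by
  funext x y z
  rw [key hf x y z, key hg x y z, hS]
  simp only [d2]
  module

lemma smul_is_cob (hf : IsCo f) (hS : (n : ℤ) • Sv f = 0) :
    (fun x y z => (n:ℤ) • f x y z) = d2 (fun a b => -((n:ℤ) • wc f a b)) := by
  funext x y z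
  rw [key hf x y z]
  simp only [d2]
  rw [smul_sub, smul_comm (n:ℤ) (x.val * ((y.val + z.val) / n)) (Sv f), hS, smul_zero]
  module

end core

/-! `ℚ/ℤ`-specific facts. -/

abbrev Mq := AddCircle (1:ℚ)

lemma torsion {n : ℕ} [NeZero n] {m : Mq} (h : (n:ℤ) • m = 0) :
    ∃ k : ℤ, m = k • (((1:ℚ)/n : ℚ) : Mq) := by
  obtain ⟨q, rfl⟩ := QuotientAddGroup.mk_surjective m
  rw [show ((QuotientAddGroup.mk q : Mq)) = (q : Mq) from rfl, ← AddCircle.coe_zsmul,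
    AddCircle.coe_eq_zero_iff] at h
  obtain ⟨l, hl⟩ := h
  have hn : (n:ℚ) ≠ 0 := Nat.cast_ne_zero.mpr (NeZero.ne n)
  refine ⟨l, ?_⟩
  show (q : Mq) = _
  rw [← AddCircle.coe_zsmul]
  congr 1
  rw [zsmul_eq_mul, zsmul_eq_mul, mul_one] at hl
  rw [zsmul_eq_mul, mul_one_div, eq_comm, div_eq_iff hn]
  push_cast at hl ⊢
  linear_combination hl

lemma nonzero {n m : ℕ} [NeZero n] (h1 : 0 < m) (h2 : m < n) :
    m • (((1:ℚ)/n : ℚ) : Mq) ≠ 0 := by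
  intro h
  rw [← AddCircle.coe_nsmul, AddCircle.coe_eq_zero_iff] at h
  obtain ⟨l, hl⟩ := h
  rw [zsmul_eq_mul, mul_one, nsmul_eq_mul] at hl
  have hn : (0:ℚ) < n := by exact_mod_cast Nat.pos_of_ne_zero (NeZero.ne n)
  have hm : (0:ℚ) < m := by exact_mod_cast h1
  have hq1 : (0:ℚ) < (m:ℚ) * (1/n) := by positivity
  have hq2 : (m:ℚ) * (1/n) < 1 := by
    rw [mul_one_div, div_lt_one hn]
    exact_mod_cast h2
  rw [← hl] at hq1 hq2
  have h3 : (0:ℤ) < l := by exact_mod_cast hq1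
  have h4 : l < 1 := by exact_mod_cast hq2
  omega

/-! Facts about the platonic cocycle, in additive notation. -/

section alpha
variable {n : ℕ} [NeZero n]

noncomputable def qf (n : ℕ) (x y z : ZMod n) : ℚ :=
  (⌊fracRep n x + fracRep n y⌋ : ℚ) * fracRep n z

noncomputable def ac (n : ℕ) (x y z : ZMod n) : Mq := (qf n x y z : Mq)

lemma E1 (x y : ZMod n) :
    fracRep n (x+y) = fracRep n x + fracRep n y - (⌊fracRep n x + fracRep n y⌋ : ℚ) := by
  have hn : (n:ℚ) ≠ 0 := Nat.cast_ne_zero.mpr (NeZero.ne n)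
  have hsum : fracRep n x + fracRep n y = (((x.val + y.val : ℕ) : ℚ))/n := by
    unfold fracRep; push_cast; ring
  have hfloor : ((⌊fracRep n x + fracRep n y⌋ : ℤ) : ℚ) = (((x.val + y.val)/n : ℕ) : ℚ) := by
    rw [hsum, Rat.floor_natCast_div_natCast]; norm_cast
  have hmod := Nat.mod_add_div (x.val + y.val) n
  have hq : ((((x.val+y.val) % n : ℕ)) : ℚ) + (n:ℚ) * (((x.val+y.val)/n : ℕ) : ℚ)
      = (((x.val+y.val) : ℕ) : ℚ) := by exact_mod_cast congrArg (fun t : ℕ => (t:ℚ)) hmod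
  rw [hfloor, hsum]
  unfold fracRep
  rw [ZMod.val_add, eq_sub_iff_add_eq, div_add' _ _ _ hn]
  exact congrArg (fun t => t / (n:ℚ)) (by linear_combination hq)

lemma E2 (x y z : ZMod n) :
    (⌊fracRep n (x+y) + fracRep n z⌋ : ℤ)
      = ⌊fracRep n x + fracRep n y + fracRep n z⌋ - ⌊fracRep n x + fracRep n y⌋ := by
  rw [E1 x y, sub_add_eq_add_sub, Int.floor_sub_intCast]

lemma E2' (x y z : ZMod n) :
    (⌊fracRep n x + fracRep n (y+z)⌋ : ℤ)
      = ⌊fracRep n x + fracRep n y + fracRep n z⌋ - ⌊fracRep n y + fracRep n z⌋ := by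
  rw [E1 y z, show fracRep n x + (fracRep n y + fracRep n z - (⌊fracRep n y + fracRep n z⌋:ℚ))
    = fracRep n x + fracRep n y + fracRep n z - (⌊fracRep n y + fracRep n z⌋:ℚ) by ring,
    Int.floor_sub_intCast]

lemma qco (x y z w : ZMod n) :
    qf n y z w - qf n (x+y) z w + qf n x (y+z) w - qf n x y (z+w) + qf n x y z
      = ((⌊fracRep n x + fracRep n y⌋ * ⌊fracRep n z + fracRep n w⌋ : ℤ) : ℚ) := by
  have h1 : ((⌊fracRep n (x+y) + fracRep n z⌋ : ℚ))
      = ((⌊fracRep n x + fracRep n y + fracRep n z⌋ : ℚ)) - ((⌊fracRep n x + fracRep n y⌋:ℚ)) := by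
    exact_mod_cast congrArg (fun t : ℤ => (t:ℚ)) (E2 x y z)
  have h2 : ((⌊fracRep n x + fracRep n (y+z)⌋ : ℚ))
      = ((⌊fracRep n x + fracRep n y + fracRep n z⌋ : ℚ)) - ((⌊fracRep n y + fracRep n z⌋:ℚ)) := by
    exact_mod_cast congrArg (fun t : ℤ => (t:ℚ)) (E2' x y z)
  have h3 := E1 z w
  unfold qf
  rw [h1, h2, h3]
  push_cast
  ring

lemma isCo_ac : IsCo (ac n) := by
  intro x y z w
  unfold ac
  simp only [← AddCircle.coe_sub, ← AddCircle.coe_add]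
  rw [qco, AddCircle.coe_eq_zero_iff]
  exact ⟨⌊fracRep n x + fracRep n y⌋ * ⌊fracRep n z + fracRep n w⌋, by
    rw [zsmul_eq_mul, mul_one]⟩

lemma floor_fr {a b : ℕ} (ha : a < n) (hb : b < n) :
    ⌊fracRep n ((a:ℕ):ZMod n) + fracRep n ((b:ℕ):ZMod n)⌋ = (((a+b)/n : ℕ) : ℤ) := by
  unfold fracRep
  rw [ZMod.val_natCast_of_lt ha, ZMod.val_natCast_of_lt hb, ← add_div,
    show ((a:ℚ) + b) = ((a+b : ℕ) : ℚ) by push_cast; ring, Rat.floor_natCast_div_natCast]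
  norm_cast

lemma Sv_ac : Sv (ac n) = (((1:ℚ)/n : ℚ) : Mq) := by
  by_cases h1 : n = 1
  · subst h1
    show ∑ j ∈ Finset.range 1, ac 1 1 ((j:ℕ):ZMod 1) 1 = _
    rw [Finset.sum_range_one]
    have hv : ∀ x : ZMod 1, x.val = 0 := fun x => by have := ZMod.val_lt x; omega
    unfold ac qf fracRep
    rw [hv 1, hv ((0:ℕ):ZMod 1)]
    norm_num
    rw [eq_comm, AddCircle.coe_eq_zero_iff]
    exact ⟨1, by norm_num⟩
  · have h2 : 2 ≤ n := by have := Nat.pos_of_ne_zero (NeZero.ne n); omega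
    haveI : Fact (1 < n) := ⟨by omega⟩
    unfold Sv
    rw [Finset.sum_eq_single_of_mem (n-1) (Finset.mem_range.mpr (by omega))]
    · unfold ac qf
      have hfl : ⌊fracRep n 1 + fracRep n (((n-1:ℕ)):ZMod n)⌋ = 1 := by
        rw [show (1 : ZMod n) = ((1:ℕ) : ZMod n) by norm_cast]
        rw [floor_fr (by omega) (by omega), show 1+(n-1) = n by omega, Nat.div_self (by omega)]
        norm_num
      rw [hfl]
      unfold fracRep
      rw [ZMod.val_one]
      norm_num
    · intro j hj hne
      unfold ac qf
      have hfl : ⌊fracRep n 1 + fracRep n ((j:ℕ):ZMod n)⌋ = 0 := by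
        rw [show (1 : ZMod n) = ((1:ℕ) : ZMod n) by norm_cast]
        rw [floor_fr (by omega) (Finset.mem_range.mp hj),
          Nat.div_eq_of_lt (by have := Finset.mem_range.mp hj; omega)]
        norm_num
      rw [hfl]
      norm_num

end alpha
end Plat

open Plat in
/-- The class of the 3-cocycle `α(a,b,c) = ⌊a'+b'⌋·c'` has exact order `n` in
`H³(ℤ/nℤ; ℚ/ℤ)`; in particular it generates `H³(ℤ/nℤ; ℚ/ℤ) ≅ ℤ/nℤ`. -/
theorem platonicCocycle_class_order (n : ℕ) (hn : 1 ≤ n) :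
    ∃ hα : platonicCocycle n ∈
        (cobound3 (Multiplicative (ZMod n)) (AddCircle (1 : ℚ))).ker,
      addOrderOf
          (QuotientAddGroup.mk (s := ((cobound2 (Multiplicative (ZMod n))
              (AddCircle (1 : ℚ))).range.addSubgroupOf
              (cobound3 (Multiplicative (ZMod n)) (AddCircle (1 : ℚ))).ker))
            ⟨platonicCocycle n, hα⟩) = n ∧
        ∀ y : thirdCohomology (Multiplicative (ZMod n)) (AddCircle (1 : ℚ)),
          ∃ k : ℤ, y = k • (QuotientAddGroup.mk ⟨platonicCocycle n, hα⟩ :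
            thirdCohomology (Multiplicative (ZMod n)) (AddCircle (1 : ℚ))) := by
  haveI : NeZero n := ⟨by omega⟩
  set G := Multiplicative (ZMod n) with hG
  -- the platonic cocycle is the multiplicative avatar of `ac n`
  have hac : ∀ x y z : ZMod n,
      ac n x y z = platonicCocycle n (Multiplicative.ofAdd x) (.ofAdd y) (.ofAdd z) :=
    fun _ _ _ => rfl
  have hα : platonicCocycle n ∈ (cobound3 G (AddCircle (1:ℚ))).ker := by
    rw [AddMonoidHom.mem_ker]
    funext g h k l
    exact isCo_ac g.toAdd h.toAdd k.toAdd l.toAdd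
  refine ⟨hα, ?_, ?_⟩
  · -- the order is exactly n
    have hS0 : (n:ℤ) • Sv (ac n) = 0 := by
      rw [Sv_ac, ← AddCircle.coe_zsmul, AddCircle.coe_eq_zero_iff]
      refine ⟨1, ?_⟩
      have hq : (n:ℚ) ≠ 0 := Nat.cast_ne_zero.mpr (NeZero.ne n)
      rw [zsmul_eq_mul, zsmul_eq_mul, mul_one_div]
      push_cast
      field_simp
    have hcob := smul_is_cob (isCo_ac (n := n)) hS0
    rw [addOrderOf_eq_iff (by omega : 0 < n)]
    constructor
    · -- n • class = 0
      have hmem : (n • (⟨platonicCocycle n, hα⟩ : (cobound3 G (AddCircle (1:ℚ))).ker))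
          ∈ ((cobound2 G (AddCircle (1:ℚ))).range.addSubgroupOf
              (cobound3 G (AddCircle (1:ℚ))).ker) := by
        rw [AddSubgroup.mem_addSubgroupOf]
        refine ⟨fun a b => -((n:ℤ) • wc (ac n) a.toAdd b.toAdd), ?_⟩
        funext a b c
        have h := congrFun (congrFun (congrFun hcob a.toAdd) b.toAdd) c.toAdd
        calc cobound2 G (AddCircle (1:ℚ))
              (fun a b => -((n:ℤ) • wc (ac n) a.toAdd b.toAdd)) a b c
            = d2 (fun u v => -((n:ℤ) • wc (ac n) u v)) a.toAdd b.toAdd c.toAdd := rfl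
          _ = (n:ℤ) • ac n a.toAdd b.toAdd c.toAdd := h.symm
          _ = ((n • (⟨platonicCocycle n, hα⟩ : (cobound3 G (AddCircle (1:ℚ))).ker) : _)
                : G → G → G → AddCircle (1:ℚ)) a b c := by
              rw [natCast_zsmul]; rfl
      rw [← QuotientAddGroup.mk_nsmul]
      exact (QuotientAddGroup.eq_zero_iff _).mpr hmem
    · intro m hmn hm0 hcon
      rw [← QuotientAddGroup.mk_nsmul] at hcon
      have hmem := (QuotientAddGroup.eq_zero_iff _).mp hcon
      rw [AddSubgroup.mem_addSubgroupOf] at hmem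
      obtain ⟨U, hU⟩ := hmem
      have hd : d2 (fun x y => U (Multiplicative.ofAdd x) (Multiplicative.ofAdd y))
          = (fun x y z => m • ac n x y z) := by
        funext x y z
        exact congrFun (congrFun (congrFun hU (Multiplicative.ofAdd x))
          (Multiplicative.ofAdd y)) (Multiplicative.ofAdd z)
      have hzero := Sv_d2 (n := n) (fun x y => U (Multiplicative.ofAdd x) (Multiplicative.ofAdd y))
      rw [hd, smul_nat_Sv, Sv_ac] at hzero
      exact nonzero hm0 hmn hzero
  · -- generation
    intro y
    obtain ⟨F, rfl⟩ := QuotientAddGroup.mk_surjective y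
    have hFco : IsCo (fun x y z =>
        F.1 (Multiplicative.ofAdd x) (Multiplicative.ofAdd y) (Multiplicative.ofAdd z)) := by
      intro x y z w
      exact congrFun (congrFun (congrFun (congrFun (AddMonoidHom.mem_ker.mp F.2)
        (Multiplicative.ofAdd x)) (Multiplicative.ofAdd y)) (Multiplicative.ofAdd z))
        (Multiplicative.ofAdd w)
    set f' : ZMod n → ZMod n → ZMod n → Mq := fun x y z =>
      F.1 (Multiplicative.ofAdd x) (Multiplicative.ofAdd y) (Multiplicative.ofAdd z) with hf'
    have hnS : (n:ℤ) • Sv f' = 0 := by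
      rw [natCast_zsmul]; exact n_smul_Sv hFco
    obtain ⟨k, hk⟩ := torsion hnS
    refine ⟨k, ?_⟩
    have hkS : Sv f' = k • Sv (ac n) := by rw [Sv_ac]; exact hk
    have hsub := sub_is_cob hFco isCo_ac k hkS
    rw [← QuotientAddGroup.mk_zsmul]
    have hW : cobound2 G (AddCircle (1:ℚ))
        (fun a b => k • wc (ac n) a.toAdd b.toAdd - wc f' a.toAdd b.toAdd)
        = fun a b c => F.1 a b c - k • platonicCocycle n a b c := by
      funext a b c
      exact (congrFun (congrFun (congrFun hsub a.toAdd) b.toAdd) c.toAdd).symm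
    refine (QuotientAddGroup.eq).mpr ?_
    rw [AddSubgroup.mem_addSubgroupOf]
    refine ⟨-(fun a b => k • wc (ac n) a.toAdd b.toAdd - wc f' a.toAdd b.toAdd), ?_⟩
    rw [map_neg, hW]
    funext a b c
    show -(F.1 a b c - k • platonicCocycle n a b c)
        = ((-F + k • (⟨platonicCocycle n, hα⟩ : (cobound3 G (AddCircle (1:ℚ))).ker) :
            (cobound3 G (AddCircle (1:ℚ))).ker) : G → G → G → AddCircle (1:ℚ)) a b c
    have hcoe : ((-F + k • (⟨platonicCocycle n, hα⟩ : (cobound3 G (AddCircle (1:ℚ))).ker) :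
            (cobound3 G (AddCircle (1:ℚ))).ker) : G → G → G → AddCircle (1:ℚ)) a b c
        = -(F.1 a b c) + k • (platonicCocycle n a b c) := rfl
    rw [hcoe]
    abel
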